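/- (Reduction of the linearized system.) Let N ≥ 1, κ > −1, β > −1, and let ω : ℝ^N → ℝ be a C² positive function satisfying −Δω + ω = ω³ pointwise; set ω_κ(x) := ω(√(1+κ)·x). Assume ω_κ is non-degenerate in the radial class: every radially symmetric C² function h : ℝ^N → ℝ with h, ∇h ∈ L²(ℝ^N) satisfying −Δh + (1+κ)h = 3(1+κ)ω_κ²h pointwise is identically zero. If (φ,ψ) is a pair of radially symmetric C² functions with φ, ψ, ∇φ, ∇ψ ∈ L²(ℝ^N) satisfying the linearized system pointwise: −Δφ + φ + κψ = ((1+κ)ω_κ²/(1+β))·((3+β)φ + 2βψ) and −Δψ + ψ + κφ = ((1+κ)ω_κ²/(1+β))·(2βφ + (3+β)ψ), then ψ = −φ and φ satisfies −Δφ + (1−κ)φ = ((1+κ)(3−β)/(1+β))·ω_κ²·φ pointwise. -/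

import Mathlib

open MeasureTheory

/-- The Euclidean Laplacian: sum of second partial derivatives. -/
noncomputable def laplacian {N : ℕ} (u : EuclideanSpace ℝ (Fin N) → ℝ)
    (x : EuclideanSpace ℝ (Fin N)) : ℝ :=
  ∑ i, iteratedFDeriv ℝ 2 u x ![EuclideanSpace.single i 1, EuclideanSpace.single i 1]

theorem stmt18 (N : ℕ) (hN : 1 ≤ N) (κ β : ℝ) (hκ : -1 < κ) (hβ : -1 < β)
    (ω : EuclideanSpace ℝ (Fin N) → ℝ) (hω : ContDiff ℝ 2 ω) (hωpos : ∀ x, 0 < ω x)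
    (hωeq : ∀ x, -laplacian ω x + ω x = ω x ^ 3)
    (ωκ : EuclideanSpace ℝ (Fin N) → ℝ)
    (hωκ : ∀ x, ωκ x = ω (Real.sqrt (1 + κ) • x))
    (hnondeg : ∀ h : EuclideanSpace ℝ (Fin N) → ℝ, ContDiff ℝ 2 h →
      (∀ x y, ‖x‖ = ‖y‖ → h x = h y) →
      MemLp h 2 (volume : Measure (EuclideanSpace ℝ (Fin N))) →
      MemLp (fun x => gradient h x) 2 (volume : Measure (EuclideanSpace ℝ (Fin N))) →
      (∀ x, -laplacian h x + (1 + κ) * h x = 3 * (1 + κ) * ωκ x ^ 2 * h x) →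
      ∀ x, h x = 0)
    (φ ψ : EuclideanSpace ℝ (Fin N) → ℝ)
    (hφ : ContDiff ℝ 2 φ) (hψ : ContDiff ℝ 2 ψ)
    (hφrad : ∀ x y, ‖x‖ = ‖y‖ → φ x = φ y) (hψrad : ∀ x y, ‖x‖ = ‖y‖ → ψ x = ψ y)
    (hφL2 : MemLp φ 2 (volume : Measure (EuclideanSpace ℝ (Fin N))))
    (hψL2 : MemLp ψ 2 (volume : Measure (EuclideanSpace ℝ (Fin N))))
    (hφgL2 : MemLp (fun x => gradient φ x) 2 (volume : Measure (EuclideanSpace ℝ (Fin N))))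
    (hψgL2 : MemLp (fun x => gradient ψ x) 2 (volume : Measure (EuclideanSpace ℝ (Fin N))))
    (heq1 : ∀ x, -laplacian φ x + φ x + κ * ψ x =
      ((1 + κ) * ωκ x ^ 2 / (1 + β)) * ((3 + β) * φ x + 2 * β * ψ x))
    (heq2 : ∀ x, -laplacian ψ x + ψ x + κ * φ x =
      ((1 + κ) * ωκ x ^ 2 / (1 + β)) * (2 * β * φ x + (3 + β) * ψ x)) :
    (∀ x, ψ x = -φ x) ∧
    (∀ x, -laplacian φ x + (1 - κ) * φ x =
      ((1 + κ) * (3 - β) / (1 + β)) * ωκ x ^ 2 * φ x) := by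
  have hβ0 : (1 : ℝ) + β ≠ 0 := by linarith
  have hlap : ∀ x, laplacian (φ + ψ) x = laplacian φ x + laplacian ψ x := by
    intro x
    unfold laplacian
    rw [← Finset.sum_add_distrib]
    refine Finset.sum_congr rfl fun i _ => ?_
    rw [iteratedFDeriv_add_apply (i := 2) hφ.contDiffAt hψ.contDiffAt]
    rfl
  have hgrad : ∀ x, gradient (φ + ψ) x = gradient φ x + gradient ψ x := by
    intro x
    have h1 := (hφ.differentiable (by norm_num)).differentiableAt (x := x) |>.hasGradientAt
    have h2 := (hψ.differentiable (by norm_num)).differentiableAt (x := x) |>.hasGradientAt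
    have : HasGradientAt (φ + ψ) (gradient φ x + gradient ψ x) x := by
      rw [hasGradientAt_iff_hasFDerivAt, map_add]
      exact h1.hasFDerivAt.add h2.hasFDerivAt
    exact this.gradient
  have h0 : ∀ x, (φ + ψ) x = 0 := by
    apply hnondeg (φ + ψ) (hφ.add hψ)
    · intro x y hxy
      simp only [Pi.add_apply, hφrad x y hxy, hψrad x y hxy]
    · exact hφL2.add hψL2
    · have : (fun x => gradient (φ + ψ) x) = fun x => gradient φ x + gradient ψ x := by
        funext x; exact hgrad x
      rw [this]
      exact hφgL2.add hψgL2
    · intro x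
      have e1 := heq1 x
      have e2 := heq2 x
      rw [hlap x]
      simp only [Pi.add_apply]
      have key : (1 + κ) * ωκ x ^ 2 / (1 + β) * ((3 + β) * φ x + 2 * β * ψ x)
          + (1 + κ) * ωκ x ^ 2 / (1 + β) * (2 * β * φ x + (3 + β) * ψ x)
          = 3 * (1 + κ) * ωκ x ^ 2 * (φ x + ψ x) := by
        field_simp
        ring
      linarith [e1, e2, key]
  have hneg : ∀ x, ψ x = -φ x := by
    intro x
    have := h0 x
    simp only [Pi.add_apply] at this
    linarith
  refine ⟨hneg, fun x => ?_⟩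
  have e1 := heq1 x
  rw [hneg x] at e1
  have key : (1 + κ) * ωκ x ^ 2 / (1 + β) * ((3 + β) * φ x + 2 * β * (-φ x))
      = (1 + κ) * (3 - β) / (1 + β) * ωκ x ^ 2 * φ x := by
    field_simp
    ring
  linarith [e1, key]
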